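/- Fix an integer n ≥ 1 and real numbers λ, ξ with ξ ≥ n·|λ| and ξ + λ² > 0. Then the vector v₀ = (ξ+λ²)^{−1/2}·(√((ξ−nλ)/2), √((ξ+nλ)/2), iλ)ᵀ ∈ ℂ³ has Euclidean norm 1 and satisfies m₁(λ,ξ)·v₀ = 0. -/
import Mathlib


open Complex Matrix

/-- The matrix `m₁ = m₁(λ,ξ)` of Lemma 5.2, with rows
`(−λ, 0, −i√((ξ−nλ)/2))`, `(0, λ, i√((ξ+nλ)/2))`, `(i√((ξ−nλ)/2), −i√((ξ+nλ)/2), n)`. -/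
noncomputable def m1 (n : ℕ) (lam ξ : ℝ) : Matrix (Fin 3) (Fin 3) ℂ :=
  !![(-lam : ℂ), 0, -Complex.I * (Real.sqrt ((ξ - n * lam) / 2) : ℂ);
     0, (lam : ℂ), Complex.I * (Real.sqrt ((ξ + n * lam) / 2) : ℂ);
     Complex.I * (Real.sqrt ((ξ - n * lam) / 2) : ℂ),
       -Complex.I * (Real.sqrt ((ξ + n * lam) / 2) : ℂ), (n : ℂ)]

/-- The unit eigenvector `v₀ = (ξ+λ²)^{−1/2}·(√((ξ−nλ)/2), √((ξ+nλ)/2), iλ)ᵀ`. -/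
noncomputable def v0 (n : ℕ) (lam ξ : ℝ) : Fin 3 → ℂ :=
  ((Real.sqrt (ξ + lam ^ 2) : ℂ))⁻¹ •
    ![(Real.sqrt ((ξ - n * lam) / 2) : ℂ),
      (Real.sqrt ((ξ + n * lam) / 2) : ℂ),
      Complex.I * (lam : ℂ)]

/-- Lemma 5.2, kernel eigenvector: for `ξ ≥ n|λ|`, `ξ + λ² > 0`,
the vector `v₀` has Euclidean norm `1` and `m₁ v₀ = 0`. -/
theorem stmt_6 (n : ℕ) (hn : 1 ≤ n) (lam ξ : ℝ) (h : (n : ℝ) * |lam| ≤ ξ)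
    (hpos : 0 < ξ + lam ^ 2) :
    ‖(WithLp.equiv 2 (Fin 3 → ℂ)).symm (v0 n lam ξ)‖ = 1 ∧
    (m1 n lam ξ).mulVec (v0 n lam ξ) = 0 := by
  have hm : 0 ≤ (ξ - n * lam) / 2 := by
    have : (n : ℝ) * lam ≤ (n : ℝ) * |lam| :=
      mul_le_mul_of_nonneg_left (le_abs_self lam) (Nat.cast_nonneg n)
    linarith
  have hp : 0 ≤ (ξ + n * lam) / 2 := by
    have : -((n : ℝ) * lam) ≤ (n : ℝ) * |lam| := by
      rw [← mul_neg]
      exact mul_le_mul_of_nonneg_left (neg_le_abs lam) (Nat.cast_nonneg n)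
    linarith
  set s1 := Real.sqrt ((ξ - n * lam) / 2) with hs1
  set s2 := Real.sqrt ((ξ + n * lam) / 2) with hs2
  have hs1sq : s1 ^ 2 = (ξ - n * lam) / 2 := Real.sq_sqrt hm
  have hs2sq : s2 ^ 2 = (ξ + n * lam) / 2 := Real.sq_sqrt hp
  have hc1 : (s1 : ℂ) ^ 2 = ((ξ : ℂ) - n * lam) / 2 := by
    rw [← Complex.ofReal_pow, hs1sq]; push_cast; ring
  have hc2 : (s2 : ℂ) ^ 2 = ((ξ : ℂ) + n * lam) / 2 := by
    rw [← Complex.ofReal_pow, hs2sq]; push_cast; ring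
  have hr : Real.sqrt (ξ + lam ^ 2) > 0 := Real.sqrt_pos.mpr hpos
  set c : ℂ := ((Real.sqrt (ξ + lam ^ 2) : ℝ) : ℂ)⁻¹ with hc
  have hv : v0 n lam ξ = ![c * (s1 : ℂ), c * (s2 : ℂ), c * (Complex.I * (lam : ℂ))] := by
    funext i; fin_cases i <;> rfl
  have e0 : v0 n lam ξ 0 = c * (s1 : ℂ) := by rw [hv]; rfl
  have e1 : v0 n lam ξ 1 = c * (s2 : ℂ) := by rw [hv]; rfl
  have e2 : v0 n lam ξ 2 = c * (Complex.I * (lam : ℂ)) := by rw [hv]; rfl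
  have nrm : ∀ r : ℝ, 0 ≤ r → ‖(r : ℂ)‖ = r := fun r hr0 => by
    simp [Complex.norm_real, _root_.abs_of_nonneg hr0]
  constructor
  · have hkey : ‖(WithLp.equiv 2 (Fin 3 → ℂ)).symm (v0 n lam ξ)‖ =
        Real.sqrt (∑ i : Fin 3, ‖v0 n lam ξ i‖ ^ 2) := by
      rw [EuclideanSpace.norm_eq]; rfl
    have hcn : ‖c‖ = (Real.sqrt (ξ + lam ^ 2))⁻¹ := by
      rw [hc, norm_inv, nrm _ (Real.sqrt_nonneg _)]
    have hn1 : ‖v0 n lam ξ 0‖ = (Real.sqrt (ξ + lam ^ 2))⁻¹ * s1 := by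
      rw [e0, norm_mul, hcn, nrm _ (Real.sqrt_nonneg _)]
    have hn2 : ‖v0 n lam ξ 1‖ = (Real.sqrt (ξ + lam ^ 2))⁻¹ * s2 := by
      rw [e1, norm_mul, hcn, nrm _ (Real.sqrt_nonneg _)]
    have hn3 : ‖v0 n lam ξ 2‖ = (Real.sqrt (ξ + lam ^ 2))⁻¹ * |lam| := by
      rw [e2, norm_mul, hcn, norm_mul, Complex.norm_I, Complex.norm_real,
        Real.norm_eq_abs, one_mul]
    rw [hkey, Fin.sum_univ_three, hn1, hn2, hn3]
    have hq : Real.sqrt (ξ + lam ^ 2) ^ 2 = ξ + lam ^ 2 := Real.sq_sqrt hpos.le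
    have hsum : ((Real.sqrt (ξ + lam ^ 2))⁻¹ * s1) ^ 2 +
        ((Real.sqrt (ξ + lam ^ 2))⁻¹ * s2) ^ 2 +
        ((Real.sqrt (ξ + lam ^ 2))⁻¹ * |lam|) ^ 2 = 1 := by
      have habs : |lam| ^ 2 = lam ^ 2 := sq_abs lam
      field_simp
      nlinarith [hs1sq, hs2sq, hq, habs]
    rw [hsum, Real.sqrt_one]
  · have hm1 : m1 n lam ξ =
        !![(-lam : ℂ), 0, -Complex.I * (s1 : ℂ);
           0, (lam : ℂ), Complex.I * (s2 : ℂ);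
           Complex.I * (s1 : ℂ), -Complex.I * (s2 : ℂ), (n : ℂ)] := rfl
    rw [hm1, hv]
    funext i
    fin_cases i <;>
      simp only [Matrix.mulVec, dotProduct, Fin.sum_univ_three, Pi.zero_apply,
        Matrix.cons_val', Matrix.cons_val_zero, Matrix.cons_val_one, Matrix.head_cons,
        Matrix.head_fin_const, Matrix.empty_val', Matrix.cons_val_fin_one, Matrix.cons_val_two,
        Matrix.tail_cons, Matrix.of_apply, Fin.mk_zero, Fin.mk_one]
    · linear_combination (-(lam : ℂ) * c * s1) * Complex.I_sq
    · linear_combination ((lam : ℂ) * c * s2) * Complex.I_sq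
    · norm_num
      linear_combination (Complex.I * c) * hc1 - (Complex.I * c) * hc2
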